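/- Suppose m = 1 (so N = 2k+2). For every ε ∈ (0,1) there exists δ > 0 such that for all a, b ∈ [0, δ), the (N−1)-dimensional Lebesgue volume of the section {(x₂,…,xₙ, y) ∈ ℝⁿ⁻¹ × ℝ : (a·y + b, x₂, …, xₙ, y) ∈ W} equals v₂ₖ · ∫_{−ε}^{ε} [ (1 − (a·y + b)² + √(ε² − y²))ᵏ − (1 − (a·y + b)² − √(ε² − y²))ᵏ ] dy. -/

import Mathlib

open MeasureTheory

/-- The Lebesgue volume of the unit ball in `ℝᵖ`. -/
noncomputable def unitBallVol (p : ℕ) : ℝ :=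
  (volume (Metric.closedBall (0 : EuclideanSpace ℝ (Fin p)) 1)).toReal

lemma unitBallVol_nonneg (p : ℕ) : 0 ≤ unitBallVol p := ENNReal.toReal_nonneg

lemma ball_vol_ne_top (p : ℕ) :
    volume (Metric.closedBall (0 : EuclideanSpace ℝ (Fin p)) 1) ≠ ⊤ :=
  (MeasureTheory.measure_closedBall_lt_top).ne

lemma annulus_vol (k : ℕ) (hk : 1 ≤ k) (c s : ℝ) (hs : 0 ≤ s) (hL : 0 ≤ 1 - c - s) :
    volume {x : EuclideanSpace ℝ (Fin (2 * k)) | (c + ‖x‖ ^ 2 - 1) ^ 2 ≤ s ^ 2} =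
      ENNReal.ofReal (((1 - c + s) ^ k - (1 - c - s) ^ k) * unitBallVol (2 * k)) := by
  haveI : Nonempty (Fin (2 * k)) := ⟨⟨0, by omega⟩⟩
  haveI : Nontrivial (EuclideanSpace ℝ (Fin (2 * k))) := by
    refine ⟨0, EuclideanSpace.single ⟨0, by omega⟩ 1, fun h => ?_⟩
    have := congrArg (fun f => f ⟨0, by omega⟩) h.symm
    simp [EuclideanSpace.single_apply] at this
  set E := EuclideanSpace ℝ (Fin (2 * k))
  have hU : 0 ≤ 1 - c + s := by linarith
  have hLU : (1 : ℝ) - c - s ≤ 1 - c + s := by linarith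
  have hsetEq : {x : E | (c + ‖x‖ ^ 2 - 1) ^ 2 ≤ s ^ 2} =
      Metric.closedBall 0 (Real.sqrt (1 - c + s)) \ Metric.ball 0 (Real.sqrt (1 - c - s)) := by
    ext x
    simp only [Set.mem_setOf_eq, Set.mem_diff, Metric.mem_closedBall, Metric.mem_ball,
      dist_zero_right, not_lt, Real.le_sqrt (norm_nonneg x) hU]
    have hx2 : Real.sqrt (1 - c - s) ≤ ‖x‖ ↔ 1 - c - s ≤ ‖x‖ ^ 2 := by
      constructor
      · intro h
        nlinarith [Real.sq_sqrt hL, Real.sqrt_nonneg (1 - c - s), norm_nonneg x]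
      · intro h
        have := Real.sqrt_le_sqrt h
        rwa [Real.sqrt_sq (norm_nonneg x)] at this
    rw [hx2]
    constructor
    · intro h
      constructor <;> nlinarith
    · rintro ⟨h1, h2⟩
      nlinarith
  rw [hsetEq, measure_diff (Metric.ball_subset_closedBall.trans
        (Metric.closedBall_subset_closedBall (Real.sqrt_le_sqrt hLU)))
      measurableSet_ball.nullMeasurableSet measure_ball_lt_top.ne]
  rw [Measure.addHaar_closedBall' _ _ (Real.sqrt_nonneg _),
      Measure.addHaar_ball _ _ (Real.sqrt_nonneg _),
      ← Measure.addHaar_closedBall_eq_addHaar_ball volume (0 : E) 1]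
  have hrank : Module.finrank ℝ E = 2 * k := finrank_euclideanSpace_fin
  rw [hrank]
  have hpow : ∀ t : ℝ, 0 ≤ t → Real.sqrt t ^ (2 * k) = t ^ k := by
    intro t ht
    rw [pow_mul, Real.sq_sqrt ht]
  rw [hpow _ hU, hpow _ hL]
  have hV : volume (Metric.closedBall (0 : EuclideanSpace ℝ (Fin (2 * k))) 1)
      = ENNReal.ofReal (unitBallVol (2 * k)) := (ENNReal.ofReal_toReal (ball_vol_ne_top _)).symm
  rw [hV, ← ENNReal.ofReal_mul (pow_nonneg hU _), ← ENNReal.ofReal_mul (pow_nonneg hL _),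
    ← ENNReal.ofReal_sub _ (mul_nonneg (pow_nonneg hL _) (unitBallVol_nonneg _))]
  ring_nf

/-- Case `m = 1` (so `N = 2k+2`).  With
`W = {(x,y) : (|x|² − 1)² + y² ≤ ε²} ⊆ ℝ^{2k+1} × ℝ`: for every `ε ∈ (0,1)` there is
`δ > 0` such that for `a, b ∈ [0, δ)` the `(N−1)`-dimensional volume of the section
`{(x₂,…,xₙ,y) : (a·y+b, x₂,…,xₙ, y) ∈ W}` equals
`v₂ₖ · ∫_{−ε}^{ε} [(1−(a·y+b)²+√(ε²−y²))ᵏ − (1−(a·y+b)²−√(ε²−y²))ᵏ] dy`. -/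
theorem section_volume_eq_integral_m_one (k : ℕ) (hk : 1 ≤ k)
    (ε : ℝ) (hε : ε ∈ Set.Ioo (0 : ℝ) 1) :
    ∃ δ > (0 : ℝ), ∀ a b : ℝ, a ∈ Set.Ico (0 : ℝ) δ → b ∈ Set.Ico (0 : ℝ) δ →
      (volume {q : EuclideanSpace ℝ (Fin (2 * k)) × ℝ |
          ((a * q.2 + b) ^ 2 + ‖q.1‖ ^ 2 - 1) ^ 2 + q.2 ^ 2 ≤ ε ^ 2}).toReal =
        unitBallVol (2 * k) *
          ∫ y in (-ε)..ε,
            ((1 - (a * y + b) ^ 2 + Real.sqrt (ε ^ 2 - y ^ 2)) ^ k -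
             (1 - (a * y + b) ^ 2 - Real.sqrt (ε ^ 2 - y ^ 2)) ^ k) := by
  obtain ⟨hε0, hε1⟩ := hε
  refine ⟨Real.sqrt (1 - ε) / (2 * (1 + ε)), div_pos (Real.sqrt_pos.mpr (by linarith)) (by linarith), ?_⟩
  rintro a b ⟨ha0, haδ⟩ ⟨hb0, hbδ⟩
  set δ := Real.sqrt (1 - ε) / (2 * (1 + ε)) with hδdef
  have hsq1ε : Real.sqrt (1 - ε) ^ 2 = 1 - ε := Real.sq_sqrt (by linarith)
  have hδsum : δ * ε + δ = Real.sqrt (1 - ε) / 2 := by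
    rw [hδdef]; field_simp; ring
  have hcb : ∀ y : ℝ, |y| ≤ ε → (a * y + b) ^ 2 ≤ (1 - ε) / 4 := by
    intro y hy
    have h1 : |a * y + b| ≤ a * |y| + b := by
      calc |a * y + b| ≤ |a * y| + |b| := abs_add_le _ _
        _ = a * |y| + b := by rw [abs_mul, abs_of_nonneg ha0, abs_of_nonneg hb0]
    have h2 : a * |y| + b ≤ δ * ε + δ := by nlinarith [abs_nonneg y]
    have h3 : |a * y + b| ≤ Real.sqrt (1 - ε) / 2 := by rw [← hδsum]; linarith
    nlinarith [sq_abs (a * y + b), abs_nonneg (a * y + b)]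
  set S := {q : EuclideanSpace ℝ (Fin (2 * k)) × ℝ |
      ((a * q.2 + b) ^ 2 + ‖q.1‖ ^ 2 - 1) ^ 2 + q.2 ^ 2 ≤ ε ^ 2} with hSdef
  have hScont : Continuous fun q : EuclideanSpace ℝ (Fin (2 * k)) × ℝ =>
      ((a * q.2 + b) ^ 2 + ‖q.1‖ ^ 2 - 1) ^ 2 + q.2 ^ 2 := by fun_prop
  have hSmeas : MeasurableSet S := measurableSet_le hScont.measurable measurable_const
  set g : ℝ → ℝ := fun y =>
    ((1 - (a * y + b) ^ 2 + Real.sqrt (ε ^ 2 - y ^ 2)) ^ k -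
     (1 - (a * y + b) ^ 2 - Real.sqrt (ε ^ 2 - y ^ 2)) ^ k) * unitBallVol (2 * k) with hgdef
  set f : ℝ → ℝ := (Set.Icc (-ε) ε).indicator g with hfdef
  have haux : ∀ y ∈ Set.Icc (-ε) ε,
      0 ≤ Real.sqrt (ε ^ 2 - y ^ 2) ∧ Real.sqrt (ε ^ 2 - y ^ 2) ≤ ε ∧
        0 ≤ 1 - (a * y + b) ^ 2 - Real.sqrt (ε ^ 2 - y ^ 2) := by
    rintro y ⟨hy1, hy2⟩
    have hy2' : y ^ 2 ≤ ε ^ 2 := by nlinarith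
    have hs2 : Real.sqrt (ε ^ 2 - y ^ 2) ^ 2 = ε ^ 2 - y ^ 2 := Real.sq_sqrt (by linarith)
    have hs0 : 0 ≤ Real.sqrt (ε ^ 2 - y ^ 2) := Real.sqrt_nonneg _
    have hsε : Real.sqrt (ε ^ 2 - y ^ 2) ≤ ε := by nlinarith
    have hc : (a * y + b) ^ 2 ≤ (1 - ε) / 4 := hcb y (abs_le.mpr ⟨hy1, hy2⟩)
    exact ⟨hs0, hsε, by linarith⟩
  have hsec : ∀ y : ℝ, volume ((fun x => (x, y)) ⁻¹' S) = ENNReal.ofReal (f y) := by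
    intro y
    by_cases hy : y ∈ Set.Icc (-ε) ε
    · obtain ⟨hs0, hsε, hL⟩ := haux y hy
      obtain ⟨hy1, hy2⟩ := hy
      have hy2' : y ^ 2 ≤ ε ^ 2 := by nlinarith
      have hs2 : Real.sqrt (ε ^ 2 - y ^ 2) ^ 2 = ε ^ 2 - y ^ 2 := Real.sq_sqrt (by linarith)
      have hpre : (fun x => (x, y)) ⁻¹' S =
          {x : EuclideanSpace ℝ (Fin (2 * k)) |
            ((a * y + b) ^ 2 + ‖x‖ ^ 2 - 1) ^ 2 ≤ Real.sqrt (ε ^ 2 - y ^ 2) ^ 2} := by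
        ext x
        simp only [hSdef, Set.mem_preimage, Set.mem_setOf_eq, hs2]
        constructor <;> intro h <;> linarith
      rw [hpre, annulus_vol k hk _ _ hs0 hL, hfdef, Set.indicator_of_mem (Set.mem_Icc.mpr ⟨hy1, hy2⟩), hgdef]
    · have hy' : ε ^ 2 < y ^ 2 := by
        rcases lt_or_ge y (-ε) with h | h
        · nlinarith
        · have : ε < y := by
            rcases lt_or_ge ε y with h2 | h2
            · exact h2
            · exact absurd (Set.mem_Icc.mpr ⟨h, h2⟩) hy
          nlinarith
      have hpre : (fun x => (x, y)) ⁻¹' S = ∅ := by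
        ext x
        simp only [hSdef, Set.mem_preimage, Set.mem_setOf_eq, Set.mem_empty_iff_false,
          iff_false, not_le]
        nlinarith [sq_nonneg ((a * y + b) ^ 2 + ‖x‖ ^ 2 - 1)]
      rw [hpre, hfdef, Set.indicator_of_notMem hy]
      simp
  have hg_nonneg : ∀ y ∈ Set.Icc (-ε) ε, 0 ≤ g y := by
    intro y hy
    obtain ⟨hs0, hsε, hL⟩ := haux y hy
    have hUL : (1 - (a * y + b) ^ 2 - Real.sqrt (ε ^ 2 - y ^ 2)) ^ k ≤
        (1 - (a * y + b) ^ 2 + Real.sqrt (ε ^ 2 - y ^ 2)) ^ k :=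
      pow_le_pow_left₀ hL (by linarith) k
    exact mul_nonneg (by linarith) (unitBallVol_nonneg _)
  have hf_nonneg : ∀ y, 0 ≤ f y := fun y => Set.indicator_nonneg hg_nonneg y
  have hg_cont : Continuous g := by fun_prop
  have hf_int : Integrable f :=
    ((hg_cont.continuousOn.integrableOn_compact isCompact_Icc).integrable_indicator
      measurableSet_Icc)
  have hvol : volume S = ENNReal.ofReal (∫ y, f y) := by
    rw [Measure.volume_eq_prod, Measure.prod_apply_symm hSmeas]
    simp_rw [hsec]
    rw [← ofReal_integral_eq_lintegral_ofReal hf_int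
      (Filter.Eventually.of_forall hf_nonneg)]
  rw [hvol, ENNReal.toReal_ofReal (integral_nonneg hf_nonneg)]
  rw [hfdef, integral_indicator measurableSet_Icc, MeasureTheory.integral_Icc_eq_integral_Ioc,
    ← intervalIntegral.integral_of_le (by linarith : -ε ≤ ε), hgdef]
  rw [intervalIntegral.integral_mul_const]
  ring
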